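/- Let κ₁, κ₂, λ₁, λ₂ > 0 and c ∈ ℝ, with erfc(p/(2√κ₁)) ≠ 1 and erfc(p/(2√κ₂)) ≠ 0. Suppose p > 0 satisfies p/2 = λ₂ c · exp(−p²/(4κ₂)) / (√(πκ₂) · erfc(p/(2√κ₂))) − λ₁ · exp(−p²/(4κ₁)) / (√(πκ₁) · (erfc(p/(2√κ₁)) − 1)). Define S(τ) = p √τ, u₁(x, τ) = 1 − (erfc(x/(2√(κ₁τ))) − 1)/(erfc(p/(2√κ₁)) − 1), and u₂(x, τ) = c · (erfc(p/(2√κ₂)) − erfc(x/(2√(κ₂τ))))/erfc(p/(2√κ₂)). Then for every τ > 0 the classical Stefan condition holds: S′(τ) = λ₂ (∂u₂/∂x)(S(τ), τ) − λ₁ (∂u₁/∂x)(S(τ), τ). -/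

import Mathlib

open Real MeasureTheory

/-- The complementary error function `erfc(z) = (2/√π) ∫_z^∞ e^(−t²) dt`. -/
noncomputable def erfc (z : ℝ) : ℝ :=
  (2 / Real.sqrt π) * ∫ t in Set.Ioi z, Real.exp (-t ^ 2)

/-- Classical liquid-phase temperature
`u₁(x, τ) = 1 − (erfc(x/(2√(κ₁τ))) − 1)/(erfc(p/(2√κ₁)) − 1)`. -/
noncomputable def classicalLiquid (κ₁ p x τ : ℝ) : ℝ :=
  1 - (erfc (x / (2 * Real.sqrt (κ₁ * τ))) - 1) / (erfc (p / (2 * Real.sqrt κ₁)) - 1)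

/-- Classical solid-phase temperature
`u₂(x, τ) = c (erfc(p/(2√κ₂)) − erfc(x/(2√(κ₂τ))))/erfc(p/(2√κ₂))`. -/
noncomputable def classicalSolid (κ₂ p c x τ : ℝ) : ℝ :=
  c * (erfc (p / (2 * Real.sqrt κ₂)) - erfc (x / (2 * Real.sqrt (κ₂ * τ)))) /
    erfc (p / (2 * Real.sqrt κ₂))

lemma integrable_exp_neg_sq : Integrable (fun t : ℝ => Real.exp (-t ^ 2)) := by
  simpa [neg_mul, one_mul] using integrable_exp_neg_mul_sq (one_pos : (0:ℝ) < 1)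

lemma hasDerivAt_erfc (z : ℝ) :
    HasDerivAt erfc (-(2 / Real.sqrt π * Real.exp (-z ^ 2))) z := by
  have hint := integrable_exp_neg_sq
  have key : ∀ w : ℝ, erfc w = (2 / Real.sqrt π) *
      (((∫ t, Real.exp (-t ^ 2)) - ∫ t in Set.Iic (0:ℝ), Real.exp (-t ^ 2))
        - ∫ t in (0:ℝ)..w, Real.exp (-t ^ 2)) := by
    intro w
    have h1 : (∫ t in Set.Iic w, Real.exp (-t ^ 2)) + ∫ t in Set.Ioi w, Real.exp (-t ^ 2)
        = ∫ t, Real.exp (-t ^ 2) :=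
      intervalIntegral.integral_Iic_add_Ioi hint.integrableOn hint.integrableOn
    have h2 : (∫ t in Set.Iic w, Real.exp (-t ^ 2)) - ∫ t in Set.Iic (0:ℝ), Real.exp (-t ^ 2)
        = ∫ t in (0:ℝ)..w, Real.exp (-t ^ 2) :=
      intervalIntegral.integral_Iic_sub_Iic hint.integrableOn hint.integrableOn
    unfold erfc
    congr 1
    linarith
  have hd : HasDerivAt (fun w => ∫ t in (0:ℝ)..w, Real.exp (-t ^ 2)) (Real.exp (-z ^ 2)) z :=
    intervalIntegral.integral_hasDerivAt_right hint.intervalIntegrable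
      hint.aestronglyMeasurable.stronglyMeasurableAtFilter (Continuous.continuousAt (by continuity))
  have h := ((hasDerivAt_const z ((∫ t, Real.exp (-t ^ 2))
      - ∫ t in Set.Iic (0:ℝ), Real.exp (-t ^ 2))).sub hd).const_mul (2 / Real.sqrt π)
  rw [show erfc = fun w => (2 / Real.sqrt π) *
      (((∫ t, Real.exp (-t ^ 2)) - ∫ t in Set.Iic (0:ℝ), Real.exp (-t ^ 2))
        - ∫ t in (0:ℝ)..w, Real.exp (-t ^ 2)) from funext key]
  exact h.congr_deriv (by ring)

lemma hasDerivAt_erfc_div (a y : ℝ) :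
    HasDerivAt (fun x => erfc (x / a)) (-(2 / Real.sqrt π * Real.exp (-(y / a) ^ 2)) / a) y := by
  have h := (hasDerivAt_erfc (y / a)).comp y ((hasDerivAt_id y).div_const a)
  simpa [div_eq_mul_inv, Function.comp_def] using h

/-- If `p > 0` solves the classical transcendental equation, then
`S(τ) = p√τ`, `u₁`, `u₂` satisfy the classical Stefan condition
`S'(τ) = λ₂ ∂u₂/∂x(S(τ), τ) − λ₁ ∂u₁/∂x(S(τ), τ)` for every `τ > 0`. -/
theorem classical_stefan_condition (κ₁ κ₂ lam₁ lam₂ c p : ℝ)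
    (hκ₁ : 0 < κ₁) (hκ₂ : 0 < κ₂) (hlam₁ : 0 < lam₁) (hlam₂ : 0 < lam₂) (hp : 0 < p)
    (hE₁ : erfc (p / (2 * Real.sqrt κ₁)) ≠ 1)
    (hE₂ : erfc (p / (2 * Real.sqrt κ₂)) ≠ 0)
    (htrans : p / 2 =
        lam₂ * c * Real.exp (-p ^ 2 / (4 * κ₂)) /
            (Real.sqrt (π * κ₂) * erfc (p / (2 * Real.sqrt κ₂))) -
          lam₁ * Real.exp (-p ^ 2 / (4 * κ₁)) /
            (Real.sqrt (π * κ₁) * (erfc (p / (2 * Real.sqrt κ₁)) - 1)))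
    (S : ℝ → ℝ) (hS : ∀ τ : ℝ, 0 ≤ τ → S τ = p * Real.sqrt τ) :
    ∀ τ : ℝ, 0 < τ →
      deriv S τ =
        lam₂ * deriv (fun y => classicalSolid κ₂ p c y τ) (S τ) -
          lam₁ * deriv (fun y => classicalLiquid κ₁ p y τ) (S τ) := by
  intro τ hτ
  have hτ' : Real.sqrt τ ≠ 0 := by positivity
  have hπ' : Real.sqrt π ≠ 0 := by positivity
  have hκ₁' : Real.sqrt κ₁ ≠ 0 := by positivity
  have hκ₂' : Real.sqrt κ₂ ≠ 0 := by positivity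
  have hE₁' : erfc (p / (2 * Real.sqrt κ₁)) - 1 ≠ 0 := sub_ne_zero.mpr hE₁
  -- deriv S
  have hSev : S =ᶠ[nhds τ] fun t => p * Real.sqrt t := by
    filter_upwards [eventually_gt_nhds hτ] with t ht using hS t ht.le
  have hdS : deriv S τ = p * (1 / (2 * Real.sqrt τ)) := by
    rw [Filter.EventuallyEq.deriv_eq hSev]
    exact ((Real.hasDerivAt_sqrt hτ.ne').const_mul p).deriv
  -- key substitution
  have hsub : ∀ κ : ℝ, 0 < κ → S τ / (2 * Real.sqrt (κ * τ)) = p / (2 * Real.sqrt κ) := by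
    intro κ hκ
    have hκ' : Real.sqrt κ ≠ 0 := by positivity
    rw [hS τ hτ.le, Real.sqrt_mul hκ.le]
    field_simp
  have hexp : ∀ κ : ℝ, 0 < κ → -(p / (2 * Real.sqrt κ)) ^ 2 = -p ^ 2 / (4 * κ) := by
    intro κ hκ
    rw [div_pow, mul_pow, Real.sq_sqrt hκ.le]
    ring
  -- derivative of liquid phase
  have hdL : deriv (fun y => classicalLiquid κ₁ p y τ) (S τ) =
      2 / Real.sqrt π * Real.exp (-p ^ 2 / (4 * κ₁)) /
        (2 * Real.sqrt (κ₁ * τ) * (erfc (p / (2 * Real.sqrt κ₁)) - 1)) := by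
    have h := (((hasDerivAt_erfc_div (2 * Real.sqrt (κ₁ * τ)) (S τ)).sub_const 1).div_const
        (erfc (p / (2 * Real.sqrt κ₁)) - 1)).const_sub 1
    simp only [classicalLiquid] at h ⊢
    rw [h.deriv, hsub κ₁ hκ₁, hexp κ₁ hκ₁]
    have h1 : Real.sqrt (κ₁ * τ) ≠ 0 := by positivity
    field_simp
  -- derivative of solid phase
  have hdS₂ : deriv (fun y => classicalSolid κ₂ p c y τ) (S τ) =
      c * (2 / Real.sqrt π * Real.exp (-p ^ 2 / (4 * κ₂))) /
        (2 * Real.sqrt (κ₂ * τ) * erfc (p / (2 * Real.sqrt κ₂))) := by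
    have h := (((hasDerivAt_erfc_div (2 * Real.sqrt (κ₂ * τ)) (S τ)).const_sub
        (erfc (p / (2 * Real.sqrt κ₂)))).const_mul c).div_const (erfc (p / (2 * Real.sqrt κ₂)))
    simp only [classicalSolid] at h ⊢
    rw [h.deriv, hsub κ₂ hκ₂, hexp κ₂ hκ₂]
    have h2 : Real.sqrt (κ₂ * τ) ≠ 0 := by positivity
    field_simp
  rw [hdS, hdL, hdS₂, Real.sqrt_mul hκ₁.le, Real.sqrt_mul hκ₂.le]
  rw [Real.sqrt_mul pi_pos.le, Real.sqrt_mul pi_pos.le] at htrans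
  field_simp
  field_simp at htrans
  linear_combination htrans
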